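/- Let q : ℤ² → ℝ³ be a DIIAS with affine normal ξ = (0,0,1). Then q can be obtained by the discrete centre-chord construction: there exist α, β : ℤ → ℝ² such that, writing q(u,v) = (x(u,v), z(u,v)) with x(u,v) ∈ ℝ² and z(u,v) ∈ ℝ, one has x(u,v) = ½(α(u) + β(v)) for all (u,v), and z satisfies z(u+1,v) − z(u,v) = det(x(u+1,v) − x(u,v), y(u,v)) and z(u,v+1) − z(u,v) = det(x(u,v+1) − x(u,v), y(u,v)) for all (u,v), where y(u,v) = ½(β(v) − α(u)). -/

import Mathlib

noncomputable section

abbrev R3 : Type := ℝ × ℝ × ℝ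
abbrev R2 : Type := ℝ × ℝ

/-- Determinant of the 3×3 matrix with columns `a`, `b`, `c`. -/
def det3 (a b c : R3) : ℝ :=
  a.1 * (b.2.1 * c.2.2 - b.2.2 * c.2.1)
    - b.1 * (a.2.1 * c.2.2 - a.2.2 * c.2.1)
    + c.1 * (a.2.1 * b.2.2 - a.2.2 * b.2.1)

/-- Determinant of the 2×2 matrix with columns `a`, `b`. -/
def det2 (a b : R2) : ℝ := a.1 * b.2 - a.2 * b.1

def e3 : R3 := ((0 : ℝ), (0 : ℝ), (1 : ℝ))

/-- First discrete partial derivative `q₁`. -/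
def D1 (q : ℤ → ℤ → R3) (u v : ℤ) : R3 := q (u + 1) v - q u v

/-- Second discrete partial derivative `q₂`. -/
def D2 (q : ℤ → ℤ → R3) (u v : ℤ) : R3 := q u (v + 1) - q u v

/-- Mixed discrete second derivative `q₁₂`. -/
def D12 (q : ℤ → ℤ → R3) (u v : ℤ) : R3 :=
  q (u + 1) (v + 1) - q (u + 1) v - q u (v + 1) + q u v

/-- Discrete second derivative `q₁₁`. -/
def D11 (q : ℤ → ℤ → R3) (u v : ℤ) : R3 := q (u + 1) v - (2 : ℝ) • q u v + q (u - 1) v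

/-- Discrete second derivative `q₂₂`. -/
def D22 (q : ℤ → ℤ → R3) (u v : ℤ) : R3 := q u (v + 1) - (2 : ℝ) • q u v + q u (v - 1)

/-- The discrete affine metric `Ω(u,v) = [q₁(u,v), q₂(u,v), ξ]`. -/
def Omega (q : ℤ → ℤ → R3) (ξ : R3) (u v : ℤ) : ℝ := det3 (D1 q u v) (D2 q u v) ξ

/-- Cubic form coefficient `A(u,v) = [q₁(u−1,v), q₁(u,v), ξ]`. -/
def Acoef (q : ℤ → ℤ → R3) (ξ : R3) (u v : ℤ) : ℝ := det3 (D1 q (u - 1) v) (D1 q u v) ξ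

/-- Cubic form coefficient `B(u,v) = [q₂(u,v), q₂(u,v−1), ξ]`. -/
def Bcoef (q : ℤ → ℤ → R3) (ξ : R3) (u v : ℤ) : ℝ := det3 (D2 q u v) (D2 q u (v - 1)) ξ

/-- `q` is a discrete improper indefinite affine sphere with affine normal `ξ`. -/
def IsDIIAS (q : ℤ → ℤ → R3) (ξ : R3) : Prop :=
  ∀ u v : ℤ,
    D12 q u v = Omega q ξ u v • ξ ∧
    0 < Omega q ξ u v ∧
    D1 q (u - 1) v ∈ Submodule.span ℝ {D1 q u v, D2 q u v} ∧
    D2 q u (v - 1) ∈ Submodule.span ℝ {D1 q u v, D2 q u v}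

/-- `x(u,v) = ½(α(u)+β(v))`. -/
def xcc (α β : ℤ → R2) (u v : ℤ) : R2 := (1 / 2 : ℝ) • (α u + β v)

/-- `y(u,v) = ½(β(v)−α(u))`. -/
def ycc (α β : ℤ → R2) (u v : ℤ) : R2 := (1 / 2 : ℝ) • (β v - α u)

/-- `z` satisfies the discrete centre-chord equations for the pair `(α,β)`. -/
def IsCentreChordZ (α β : ℤ → R2) (z : ℤ → ℤ → ℝ) : Prop :=
  ∀ u v : ℤ,
    z (u + 1) v - z u v = det2 (xcc α β (u + 1) v - xcc α β u v) (ycc α β u v) ∧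
    z u (v + 1) - z u v = det2 (xcc α β u (v + 1) - xcc α β u v) (ycc α β u v)

/-- The centre-chord net `q(u,v) = (x(u,v), z(u,v))`. -/
def ccq (α β : ℤ → R2) (z : ℤ → ℤ → ℝ) (u v : ℤ) : R3 :=
  ((xcc α β u v).1, (xcc α β u v).2, z u v)

/-- `Ω(u,v) = ¼ det(α₁(u), β₂(v))` of the centre-chord construction. -/
def OmegaCC (α β : ℤ → R2) (u v : ℤ) : ℝ :=
  (1 / 4 : ℝ) * det2 (α (u + 1) - α u) (β (v + 1) - β v)

/-- `α₁(u)` is discretely parallel to `β(v)`. -/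
def dpAB (α β : ℤ → R2) (u v : ℤ) : Prop :=
  0 < det2 (α (u + 1) - α u) (β (v + 1) - β v) * det2 (α (u + 1) - α u) (β (v - 1) - β v)

/-- `β₂(v)` is discretely parallel to `α(u)`. -/
def dpBA (α β : ℤ → R2) (u v : ℤ) : Prop :=
  0 < det2 (β (v + 1) - β v) (α (u + 1) - α u) * det2 (β (v + 1) - β v) (α (u - 1) - α u)

/-- Genericity assumption (G1). -/
def G1 (α β : ℤ → R2) : Prop :=
  ∀ u v : ℤ,
    LinearIndependent ℝ ![β (v - 1) - α u, β (v + 1) - α u] ∧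
    ∃ s t : ℝ, 0 < s ∧ 0 < t ∧
      β v - α u = s • (β (v - 1) - α u) + t • (β (v + 1) - α u)

/-- Genericity assumption (G2). -/
def G2 (α β : ℤ → R2) : Prop :=
  ∀ u v : ℤ,
    LinearIndependent ℝ ![α (u - 1) - β v, α (u + 1) - β v] ∧
    ∃ s t : ℝ, 0 < s ∧ 0 < t ∧
      α u - β v = s • (α (u - 1) - β v) + t • (α (u + 1) - β v)

/-- Genericity assumption (G3): no edge of `α` is parallel to an edge of `β`. -/
def G3 (α β : ℤ → R2) : Prop :=
  ∀ u v : ℤ, det2 (α (u + 1) - α u) (β (v + 1) - β v) ≠ 0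

/-- Euclidean dot product on `ℝ³`. -/
def dot3 (a b : R3) : ℝ := a.1 * b.1 + a.2.1 * b.2.1 + a.2.2 * b.2.2

/-- Projection of `ℝ³` onto the first two coordinates. -/
def projxy (p : R3) : R2 := (p.1, p.2.1)


-- ===== auxiliary machinery for stmt5 =====

private lemma auxConst (f : ℤ → ℝ) (h : ∀ v : ℤ, f (v + 1) = f v) : ∀ v : ℤ, f v = f 0 := by
  intro v
  induction v using Int.induction_on with
  | zero => rfl
  | succ n ih => rw [h]; exact ih
  | pred n ih =>
    have h2 := h (-(n : ℤ) - 1)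
    rw [show (-(n : ℤ) - 1) + 1 = -(n : ℤ) from by ring] at h2
    rw [← h2]; exact ih

private lemma auxZeroRel (f : ℤ → ℝ) (h0 : f 0 = 0)
    (h : ∀ u : ℤ, ∃ l : ℝ, l ≠ 0 ∧ f (u - 1) = l * f u) : ∀ u : ℤ, f u = 0 := by
  intro u
  induction u using Int.induction_on with
  | zero => exact h0
  | succ n ih =>
    obtain ⟨l, hl, hr⟩ := h ((n : ℤ) + 1)
    rw [show ((n : ℤ) + 1) - 1 = (n : ℤ) from by ring] at hr
    exact (mul_eq_zero.mp (hr.symm.trans ih)).resolve_left hl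
  | pred n ih =>
    obtain ⟨l, _, hr⟩ := h (-(n : ℤ))
    rw [hr, ih, mul_zero]

private def x1 (q : ℤ → ℤ → R3) (u v : ℤ) : ℝ := (q u v).1
private def x2 (q : ℤ → ℤ → R3) (u v : ℤ) : ℝ := (q u v).2.1
private def zz (q : ℤ → ℤ → R3) (u v : ℤ) : ℝ := (q u v).2.2
private def A1 (q : ℤ → ℤ → R3) (u : ℤ) : ℝ := x1 q (u + 1) 0 - x1 q u 0
private def A2 (q : ℤ → ℤ → R3) (u : ℤ) : ℝ := x2 q (u + 1) 0 - x2 q u 0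
private def B1 (q : ℤ → ℤ → R3) (v : ℤ) : ℝ := x1 q 0 (v + 1) - x1 q 0 v
private def B2 (q : ℤ → ℤ → R3) (v : ℤ) : ℝ := x2 q 0 (v + 1) - x2 q 0 v
private def Y1 (q : ℤ → ℤ → R3) (u v : ℤ) : ℝ := x1 q 0 v - x1 q 0 0 - x1 q u 0
private def Y2 (q : ℤ → ℤ → R3) (u v : ℤ) : ℝ := x2 q 0 v - x2 q 0 0 - x2 q u 0
private def Ff (q : ℤ → ℤ → R3) (u v : ℤ) : ℝ :=
  zz q (u + 1) v - zz q u v - (A1 q u * Y2 q u v - A2 q u * Y1 q u v)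
private def Gg (q : ℤ → ℤ → R3) (u v : ℤ) : ℝ :=
  zz q u (v + 1) - zz q u v - (B1 q v * Y2 q u v - B2 q v * Y1 q u v)
private def cc1 (q : ℤ → ℤ → R3) : ℝ :=
  (Ff q 0 0 * B1 q 0 - Gg q 0 0 * A1 q 0) / Omega q e3 0 0
private def cc2 (q : ℤ → ℤ → R3) : ℝ :=
  (Ff q 0 0 * B2 q 0 - Gg q 0 0 * A2 q 0) / Omega q e3 0 0
private def Hh (q : ℤ → ℤ → R3) (u : ℤ) : ℝ :=
  Ff q u 0 - (A1 q u * cc2 q - A2 q u * cc1 q)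
private def Kk (q : ℤ → ℤ → R3) (v : ℤ) : ℝ :=
  Gg q 0 v - (B1 q v * cc2 q - B2 q v * cc1 q)

section Aux
variable {q : ℤ → ℤ → R3}

private lemma mix1 (hq : IsDIIAS q e3) (u v : ℤ) :
    x1 q (u + 1) (v + 1) - x1 q (u + 1) v - x1 q u (v + 1) + x1 q u v = 0 := by
  have h := congrArg Prod.fst (hq u v).1
  have h2 : (Omega q e3 u v • e3).1 = 0 := by simp [e3]
  simp only [D12, Prod.fst_add, Prod.fst_sub] at h
  rw [h2] at h
  simp only [x1]
  linarith [h]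

private lemma mix2 (hq : IsDIIAS q e3) (u v : ℤ) :
    x2 q (u + 1) (v + 1) - x2 q (u + 1) v - x2 q u (v + 1) + x2 q u v = 0 := by
  have h := congrArg (fun p : R3 => p.2.1) (hq u v).1
  have h2 : (Omega q e3 u v • e3).2.1 = 0 := by simp [e3]
  simp only [D12, Prod.fst_add, Prod.fst_sub, Prod.snd_add, Prod.snd_sub] at h
  rw [h2] at h
  simp only [x2]
  linarith [h]

private lemma mixz (hq : IsDIIAS q e3) (u v : ℤ) :
    zz q (u + 1) (v + 1) - zz q (u + 1) v - zz q u (v + 1) + zz q u v = Omega q e3 u v := by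
  have h := congrArg (fun p : R3 => p.2.2) (hq u v).1
  have h2 : (Omega q e3 u v • e3).2.2 = Omega q e3 u v := by simp [e3]
  simp only [D12, Prod.fst_add, Prod.fst_sub, Prod.snd_add, Prod.snd_sub] at h
  rw [h2] at h
  simp only [zz]
  linarith [h]

private lemma edge1 (hq : IsDIIAS q e3) (u v : ℤ) :
    x1 q (u + 1) v - x1 q u v = A1 q u := by
  have h := auxConst (fun v => x1 q (u + 1) v - x1 q u v)
    (fun v => by have := mix1 hq u v; linarith) v
  simpa [A1] using h

private lemma edge2 (hq : IsDIIAS q e3) (u v : ℤ) :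
    x2 q (u + 1) v - x2 q u v = A2 q u := by
  have h := auxConst (fun v => x2 q (u + 1) v - x2 q u v)
    (fun v => by have := mix2 hq u v; linarith) v
  simpa [A2] using h

private lemma edge1' (hq : IsDIIAS q e3) (u v : ℤ) :
    x1 q u (v + 1) - x1 q u v = B1 q v := by
  have h := auxConst (fun u => x1 q u (v + 1) - x1 q u v)
    (fun u => by have := mix1 hq u v; linarith) u
  simpa [B1] using h

private lemma edge2' (hq : IsDIIAS q e3) (u v : ℤ) :
    x2 q u (v + 1) - x2 q u v = B2 q v := by
  have h := auxConst (fun u => x2 q u (v + 1) - x2 q u v)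
    (fun u => by have := mix2 hq u v; linarith) u
  simpa [B2] using h

private lemma sep1 (hq : IsDIIAS q e3) (u v : ℤ) :
    x1 q u v = x1 q u 0 + x1 q 0 v - x1 q 0 0 := by
  have h := auxConst (fun u => x1 q u v - x1 q u 0)
    (fun u => by
      have h1 := edge1 hq u v; have h2 := edge1 hq u 0; linarith) u
  linarith [h]

private lemma sep2 (hq : IsDIIAS q e3) (u v : ℤ) :
    x2 q u v = x2 q u 0 + x2 q 0 v - x2 q 0 0 := by
  have h := auxConst (fun u => x2 q u v - x2 q u 0)
    (fun u => by
      have h1 := edge2 hq u v; have h2 := edge2 hq u 0; linarith) u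
  linarith [h]

private lemma Lom (hq : IsDIIAS q e3) (u v : ℤ) :
    Omega q e3 u v = A1 q u * B2 q v - A2 q u * B1 q v := by
  have h1 := edge1 hq u v
  have h2 := edge2 hq u v
  have h3 := edge1' hq u v
  have h4 := edge2' hq u v
  have h0 : Omega q e3 u v =
      (x1 q (u + 1) v - x1 q u v) * (x2 q u (v + 1) - x2 q u v)
        - (x2 q (u + 1) v - x2 q u v) * (x1 q u (v + 1) - x1 q u v) := by
    simp only [Omega, det3, D1, D2, e3, Prod.fst_sub, Prod.snd_sub, x1, x2]
    ring
  rw [h0, h1, h2, h3, h4]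

private lemma hOmpos (hq : IsDIIAS q e3) (u v : ℤ) : 0 < Omega q e3 u v := (hq u v).2.1

private lemma LF (hq : IsDIIAS q e3) (u v : ℤ) : Ff q u v = Ff q u 0 := by
  refine auxConst (fun v => Ff q u v) (fun v => ?_) v
  have hz := mixz hq u v
  have ho := Lom hq u v
  simp only [A1, A2, B1, B2] at ho
  simp only [Ff, Y1, Y2, A1, A2]
  linear_combination hz + ho

private lemma LG (hq : IsDIIAS q e3) (u v : ℤ) : Gg q u v = Gg q 0 v := by
  refine auxConst (fun u => Gg q u v) (fun u => ?_) u
  have hz := mixz hq u v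
  have ho := Lom hq u v
  simp only [A1, A2, B1, B2] at ho
  simp only [Gg, Y1, Y2, B1, B2]
  linear_combination hz + ho

private lemma hH0 (hq : IsDIIAS q e3) : Hh q 0 = 0 := by
  have ho := Lom hq 0 0
  have hne : Omega q e3 0 0 ≠ 0 := ne_of_gt (hOmpos hq 0 0)
  simp only [Hh, cc1, cc2]
  field_simp
  linear_combination Ff q 0 0 * ho

private lemma hK0 (hq : IsDIIAS q e3) : Kk q 0 = 0 := by
  have ho := Lom hq 0 0
  have hne : Omega q e3 0 0 ≠ 0 := ne_of_gt (hOmpos hq 0 0)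
  simp only [Kk, cc1, cc2]
  field_simp
  linear_combination Gg q 0 0 * ho

private lemma spanH (hq : IsDIIAS q e3) (u : ℤ) :
    ∃ l : ℝ, l ≠ 0 ∧ Hh q (u - 1) = l * Hh q u := by
  obtain ⟨l, m, hsp⟩ := Submodule.mem_span_pair.mp (hq u 0).2.2.1
  simp only [D1, D2] at hsp
  rw [show u - 1 + 1 = u from by ring] at hsp
  have r1 := congrArg Prod.fst hsp
  have r2 := congrArg (fun p : R3 => p.2.1) hsp
  have r3 := congrArg (fun p : R3 => p.2.2) hsp
  simp only [Prod.fst_add, Prod.fst_sub, Prod.snd_add, Prod.snd_sub, Prod.smul_fst,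
    Prod.smul_snd, smul_eq_mul] at r1 r2 r3
  norm_num at r1 r2 r3
  have E1 : l * (x1 q (u + 1) 0 - x1 q u 0) + m * (x1 q u 1 - x1 q u 0)
      = x1 q u 0 - x1 q (u - 1) 0 := r1
  have E2 : l * (x2 q (u + 1) 0 - x2 q u 0) + m * (x2 q u 1 - x2 q u 0)
      = x2 q u 0 - x2 q (u - 1) 0 := r2
  have E3 : l * (zz q (u + 1) 0 - zz q u 0) + m * (zz q u 1 - zz q u 0)
      = zz q u 0 - zz q (u - 1) 0 := r3
  have hedB1 : x1 q u 1 - x1 q u 0 = x1 q 0 1 - x1 q 0 0 := by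
    have h := edge1' hq u 0
    simp only [B1] at h
    norm_num at h
    exact h
  have hedB2 : x2 q u 1 - x2 q u 0 = x2 q 0 1 - x2 q 0 0 := by
    have h := edge2' hq u 0
    simp only [B2] at h
    norm_num at h
    exact h
  have E1' : l * (x1 q (u + 1) 0 - x1 q u 0) + m * (x1 q 0 1 - x1 q 0 0)
      = x1 q u 0 - x1 q (u - 1) 0 := by linear_combination E1 - m * hedB1
  have E2' : l * (x2 q (u + 1) 0 - x2 q u 0) + m * (x2 q 0 1 - x2 q 0 0)
      = x2 q u 0 - x2 q (u - 1) 0 := by linear_combination E2 - m * hedB2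
  have W : zz q u 1 - zz q u 0 = (x1 q 0 1 - x1 q 0 0) * (cc2 q - x2 q u 0)
      - (x2 q 0 1 - x2 q 0 0) * (cc1 q - x1 q u 0) := by
    have hg := LG hq u 0
    have hk := hK0 hq
    simp only [Gg, Kk, Y1, Y2, B1, B2] at hg hk
    norm_num at hg hk
    linear_combination hg + hk
  have hlam : Omega q e3 (u - 1) 0 = l * Omega q e3 u 0 := by
    have h1 := Lom hq (u - 1) 0
    have h2 := Lom hq u 0
    simp only [A1, A2, B1, B2] at h1 h2
    rw [show u - 1 + 1 = u from by ring] at h1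
    norm_num at h1 h2
    linear_combination h1 - l * h2 - (x2 q 0 1 - x2 q 0 0) * E1' + (x1 q 0 1 - x1 q 0 0) * E2'
  have hl : l ≠ 0 := by
    intro h
    rw [h, zero_mul] at hlam
    exact absurd hlam (ne_of_gt (hOmpos hq (u - 1) 0))
  refine ⟨l, hl, ?_⟩
  simp only [Hh, Ff, Y1, Y2, A1, A2]
  rw [show u - 1 + 1 = u from by ring]
  linear_combination (-1 : ℝ) * E3 + m * W + (cc2 q - x2 q u 0) * E1' + (x1 q u 0 - cc1 q) * E2'

private lemma spanK (hq : IsDIIAS q e3) (v : ℤ) :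
    ∃ l : ℝ, l ≠ 0 ∧ Kk q (v - 1) = l * Kk q v := by
  obtain ⟨l, m, hsp⟩ := Submodule.mem_span_pair.mp (hq 0 v).2.2.2
  simp only [D1, D2] at hsp
  rw [show v - 1 + 1 = v from by ring] at hsp
  have r1 := congrArg Prod.fst hsp
  have r2 := congrArg (fun p : R3 => p.2.1) hsp
  have r3 := congrArg (fun p : R3 => p.2.2) hsp
  simp only [Prod.fst_add, Prod.fst_sub, Prod.snd_add, Prod.snd_sub, Prod.smul_fst,
    Prod.smul_snd, smul_eq_mul] at r1 r2 r3
  norm_num at r1 r2 r3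
  have F1 : l * (x1 q 1 v - x1 q 0 v) + m * (x1 q 0 (v + 1) - x1 q 0 v)
      = x1 q 0 v - x1 q 0 (v - 1) := r1
  have F2 : l * (x2 q 1 v - x2 q 0 v) + m * (x2 q 0 (v + 1) - x2 q 0 v)
      = x2 q 0 v - x2 q 0 (v - 1) := r2
  have F3 : l * (zz q 1 v - zz q 0 v) + m * (zz q 0 (v + 1) - zz q 0 v)
      = zz q 0 v - zz q 0 (v - 1) := r3
  have hedA1 : x1 q 1 v - x1 q 0 v = x1 q 1 0 - x1 q 0 0 := by
    have h := edge1 hq 0 v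
    simp only [A1] at h
    norm_num at h
    exact h
  have hedA2 : x2 q 1 v - x2 q 0 v = x2 q 1 0 - x2 q 0 0 := by
    have h := edge2 hq 0 v
    simp only [A2] at h
    norm_num at h
    exact h
  have F1' : l * (x1 q 1 0 - x1 q 0 0) + m * (x1 q 0 (v + 1) - x1 q 0 v)
      = x1 q 0 v - x1 q 0 (v - 1) := by linear_combination F1 - l * hedA1
  have F2' : l * (x2 q 1 0 - x2 q 0 0) + m * (x2 q 0 (v + 1) - x2 q 0 v)
      = x2 q 0 v - x2 q 0 (v - 1) := by linear_combination F2 - l * hedA2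
  have W2 : zz q 1 v - zz q 0 v
      = (x1 q 1 0 - x1 q 0 0) * (cc2 q + (x2 q 0 v - x2 q 0 0 - x2 q 0 0))
        - (x2 q 1 0 - x2 q 0 0) * (cc1 q + (x1 q 0 v - x1 q 0 0 - x1 q 0 0)) := by
    have hf := LF hq 0 v
    have hh := hH0 hq
    simp only [Ff, Hh, Y1, Y2, A1, A2] at hf hh
    norm_num at hf hh
    linear_combination hf + hh
  have hmu : Omega q e3 0 (v - 1) = m * Omega q e3 0 v := by
    have h1 := Lom hq 0 (v - 1)
    have h2 := Lom hq 0 v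
    simp only [A1, A2, B1, B2] at h1 h2
    rw [show v - 1 + 1 = v from by ring] at h1
    norm_num at h1 h2
    linear_combination h1 - m * h2 + (x2 q 1 0 - x2 q 0 0) * F1' - (x1 q 1 0 - x1 q 0 0) * F2'
  have hm : m ≠ 0 := by
    intro h
    rw [h, zero_mul] at hmu
    exact absurd hmu (ne_of_gt (hOmpos hq 0 (v - 1)))
  refine ⟨m, hm, ?_⟩
  simp only [Kk, Gg, Y1, Y2, B1, B2]
  rw [show v - 1 + 1 = v from by ring]
  linear_combination (-1 : ℝ) * F3 + l * W2
    + (x2 q 0 v - x2 q 0 0 - x2 q 0 0 + cc2 q) * F1'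
    - (x1 q 0 v - x1 q 0 0 - x1 q 0 0 + cc1 q) * F2'

end Aux

/-- every DIIAS with affine normal `(0,0,1)` is obtained by the
discrete centre-chord construction. -/
theorem stmt5 (q : ℤ → ℤ → R3) (hq : IsDIIAS q e3) :
    ∃ α β : ℤ → R2, ∀ u v : ℤ,
      projxy (q u v) = xcc α β u v ∧
      (q (u + 1) v).2.2 - (q u v).2.2 =
        det2 (projxy (q (u + 1) v) - projxy (q u v)) (ycc α β u v) ∧
      (q u (v + 1)).2.2 - (q u v).2.2 =
        det2 (projxy (q u (v + 1)) - projxy (q u v)) (ycc α β u v) := by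
  have hH : ∀ u : ℤ, Hh q u = 0 := auxZeroRel (Hh q) (hH0 hq) (spanH hq)
  have hK : ∀ v : ℤ, Kk q v = 0 := auxZeroRel (Kk q) (hK0 hq) (spanK hq)
  refine ⟨fun u => (2 * x1 q u 0 - cc1 q, 2 * x2 q u 0 - cc2 q),
    fun v => (2 * (x1 q 0 v - x1 q 0 0) + cc1 q, 2 * (x2 q 0 v - x2 q 0 0) + cc2 q), ?_⟩
  intro u v
  refine ⟨?_, ?_, ?_⟩
  · have h1 := sep1 hq u v
    have h2 := sep2 hq u v
    simp only [x1, x2] at h1 h2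
    simp only [projxy, xcc, x1, x2, Prod.mk_add_mk, Prod.smul_mk, smul_eq_mul,
      Prod.mk.injEq]
    constructor <;> linarith
  · have hFv := LF hq u v
    have hHu := hH u
    have he1 := edge1 hq u v
    have he2 := edge2 hq u v
    simp only [Ff, Hh, Y1, Y2, A1, A2, x1, x2, zz] at hFv hHu he1 he2
    simp only [ycc, det2, projxy, x1, x2, Prod.mk_sub_mk, Prod.smul_mk, smul_eq_mul]
    linear_combination hFv + hHu
      - ((q 0 v).2.1 - (q 0 0).2.1 - (q u 0).2.1 + cc2 q) * he1
      + ((q 0 v).1 - (q 0 0).1 - (q u 0).1 + cc1 q) * he2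
  · have hGv := LG hq u v
    have hKv := hK v
    have he1 := edge1' hq u v
    have he2 := edge2' hq u v
    simp only [Gg, Kk, Y1, Y2, B1, B2, x1, x2, zz] at hGv hKv he1 he2
    simp only [ycc, det2, projxy, x1, x2, Prod.mk_sub_mk, Prod.smul_mk, smul_eq_mul]
    linear_combination hGv + hKv
      - ((q 0 v).2.1 - (q 0 0).2.1 - (q u 0).2.1 + cc2 q) * he1
      + ((q 0 v).1 - (q 0 0).1 - (q u 0).1 + cc1 q) * he2
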